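/- arXiv:2209.12569 — 4 statements merged into one kernel-verified Lean document; each statement's English description precedes it below -/
import Mathlib

section
/- Let α : C₀ ⥤ C₁ and β : D₀ ⥤ D₁ be functors between small categories, and let F : C₀ ⥤ Type and G : D₀ ⥤ Type be functors. Then the left Kan extension of the external product functor (c,d) ↦ F(c) × G(d) along α × β : C₀ × D₀ ⥤ C₁ × D₁ is naturally isomorphic to the external product of the left Kan extensions, i.e. the functor (c,d) ↦ (Lan_α F)(c) × (Lan_β G)(d). -/
open CategoryTheory

universe u

/-- The external product of `F : C ⥤ Type` and `G : D ⥤ Type`, defined by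
`(c, d) ↦ F(c) × G(d)` (as the composite of `F.prod G` with the binary product
functor on `Type`, i.e. the tensor functor of the cartesian monoidal structure). -/
noncomputable def typeExtProd {C D : Type u} [SmallCategory C] [SmallCategory D]
    (F : C ⥤ Type u) (G : D ⥤ Type u) : C × D ⥤ Type u :=
  F.prod G ⋙ MonoidalCategory.tensor (Type u)

namespace LanExtProdAux

open CategoryTheory.Limits CategoryTheory.Functor MonoidalCategory

variable {C₀ C₁ D₀ D₁ : Type u}
    [SmallCategory C₀] [SmallCategory C₁] [SmallCategory D₀] [SmallCategory D₁]
    (α : C₀ ⥤ C₁) (β : D₀ ⥤ D₁) (F : C₀ ⥤ Type u) (G : D₀ ⥤ Type u)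

/-- The canonical unit `F ⊠ G ⟶ (α × β) ⋙ (Lan F ⊠ Lan G)`. -/
noncomputable def extUnit :
    typeExtProd F G ⟶ (α.prod β) ⋙ typeExtProd (α.lan.obj F) (β.lan.obj G) where
  app p := TypeCat.ofHom fun (xy : F.obj p.1 × G.obj p.2) =>
    ((α.lanUnit.app F).app p.1 xy.1, ((β.lanUnit).app G).app p.2 xy.2)
  naturality p q f := by
    ext xy
    dsimp [typeExtProd]
    refine Prod.ext ?_ ?_
    · exact types_congr_hom ((α.lanUnit.app F).naturality f.1) xy.1
    · exact types_congr_hom ((β.lanUnit.app G).naturality f.2) xy.2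

variable (Y : C₁ × D₁)

/-- Pair of costructured arrows into a costructured arrow over the product. -/
abbrev mkE (i : CostructuredArrow α Y.1) (j : CostructuredArrow β Y.2) :
    CostructuredArrow (α.prod β) Y :=
  CostructuredArrow.mk (Y := (i.left, j.left))
    ((i.hom, j.hom) : (α.prod β).obj (i.left, j.left) ⟶ Y)

variable (s : Cocone (CostructuredArrow.proj (α.prod β) Y ⋙ typeExtProd F G))

/-- Inner cocone: for fixed `i`, a cocone over `proj β Y.2 ⋙ G` with point
`F.obj i.left → s.pt`. -/
@[simps] noncomputable def innerCocone (i : CostructuredArrow α Y.1) :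
    Cocone (CostructuredArrow.proj β Y.2 ⋙ G) where
  pt := F.obj i.left ⟶ s.pt
  ι := {
    app := fun j => TypeCat.ofHom fun y => TypeCat.ofHom fun x => s.ι.app (mkE α β Y i j) (x, y)
    naturality := fun j j' g => by
      ext y
      apply ConcreteCategory.hom_ext
      intro x
      have h : s.ι.app (mkE α β Y i j') (F.map (𝟙 i.left) x, G.map g.left y) =
          s.ι.app (mkE α β Y i j) (x, y) := types_congr_hom (s.ι.naturality
        ((CostructuredArrow.homMk ((𝟙 i.left, g.left) : (i.left, j.left) ⟶ (i.left, j'.left))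
          (by refine Prod.ext ?_ ?_ <;> simp [CostructuredArrow.w g])) :
            mkE α β Y i j ⟶ mkE α β Y i j')) (x, y)
      change s.ι.app (mkE α β Y i j') (x, G.map g.left y) = s.ι.app (mkE α β Y i j) (x, y)
      simpa using h }

/-- The colimit cocone for `Lan F` at `Y.1`. -/
noncomputable def hF : (LeftExtension.mk _ (α.lanUnit.app F)).IsPointwiseLeftKanExtension :=
  isPointwiseLeftKanExtensionOfIsLeftKanExtension _ (α.lanUnit.app F)

noncomputable def hG : (LeftExtension.mk _ (β.lanUnit.app G)).IsPointwiseLeftKanExtension :=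
  isPointwiseLeftKanExtensionOfIsLeftKanExtension _ (β.lanUnit.app G)

/-- Outer cocone: a cocone over `proj α Y.1 ⋙ F` with point
`(Lan G).obj Y.2 → s.pt`. -/
@[simps] noncomputable def outerCocone :
    Cocone (CostructuredArrow.proj α Y.1 ⋙ F) where
  pt := (β.lan.obj G).obj Y.2 ⟶ s.pt
  ι := {
    app := fun i => TypeCat.ofHom fun x => TypeCat.ofHom fun b =>
        ConcreteCategory.hom (C := Type u) (X := F.obj i.left) (Y := s.pt)
          ((hG β G Y.2).desc (innerCocone α β F G Y s i) b) x
    naturality := fun i i' f => by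
      apply ConcreteCategory.hom_ext
      intro x
      apply (hG β G Y.2).hom_ext
      intro j
      apply ConcreteCategory.hom_ext
      intro y
      have h1 := types_congr_hom ((hG β G Y.2).fac (innerCocone α β F G Y s i') j) y
      have h2 := types_congr_hom ((hG β G Y.2).fac (innerCocone α β F G Y s i) j) y
      have h3 : s.ι.app (mkE α β Y i' j) (F.map f.left x, G.map (𝟙 j.left) y) =
          s.ι.app (mkE α β Y i j) (x, y) := types_congr_hom (s.ι.naturality
        ((CostructuredArrow.homMk ((f.left, 𝟙 j.left) : (i.left, j.left) ⟶ (i'.left, j.left))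
          (by refine Prod.ext ?_ ?_ <;> simp [CostructuredArrow.w f])) :
            mkE α β Y i j ⟶ mkE α β Y i' j)) (x, y)
      change ConcreteCategory.hom (C := Type u) (X := F.obj i'.left) (Y := s.pt)
          (ConcreteCategory.hom (((LeftExtension.mk _ (β.lanUnit.app G)).coconeAt Y.2).ι.app j ≫
            (hG β G Y.2).desc (innerCocone α β F G Y s i')) y) (F.map f.left x) =
        ConcreteCategory.hom (C := Type u) (X := F.obj i.left) (Y := s.pt)
          (ConcreteCategory.hom (((LeftExtension.mk _ (β.lanUnit.app G)).coconeAt Y.2).ι.app j ≫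
            (hG β G Y.2).desc (innerCocone α β F G Y s i)) y) x
      rw [h1, h2]
      rw [CategoryTheory.Functor.map_id] at h3
      exact h3 }

/-- `(Lan F) ⊠ (Lan G)` with unit `extUnit` is a pointwise left Kan extension. -/
noncomputable def extPointwise :
    (LeftExtension.mk _ (extUnit α β F G)).IsPointwiseLeftKanExtension := fun Y =>
  { desc := fun s => TypeCat.ofHom fun (ab : (α.lan.obj F).obj Y.1 × (β.lan.obj G).obj Y.2) =>
      ConcreteCategory.hom (C := Type u) (X := (β.lan.obj G).obj Y.2) (Y := s.pt)
        ((hF α F Y.1).desc (outerCocone α β F G Y s) ab.1) ab.2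
    fac := fun s E => by
      apply ConcreteCategory.hom_ext
      intro xy
      have h1 := types_congr_hom ((hF α F Y.1).fac (outerCocone α β F G Y s)
        (CostructuredArrow.mk E.hom.1)) xy.1
      have h2 := types_congr_hom ((hG β G Y.2).fac
        (innerCocone α β F G Y s (CostructuredArrow.mk E.hom.1))
        (CostructuredArrow.mk E.hom.2)) xy.2
      change ConcreteCategory.hom (C := Type u) (X := (β.lan.obj G).obj Y.2) (Y := s.pt)
          (ConcreteCategory.hom (((LeftExtension.mk _ (α.lanUnit.app F)).coconeAt Y.1).ι.app (CostructuredArrow.mk E.hom.1) ≫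
            (hF α F Y.1).desc (outerCocone α β F G Y s)) xy.1)
          (((LeftExtension.mk _ (β.lanUnit.app G)).coconeAt Y.2).ι.app (CostructuredArrow.mk E.hom.2) xy.2) = s.ι.app E xy
      rw [h1]
      change ConcreteCategory.hom (C := Type u) (X := F.obj E.left.1) (Y := s.pt)
          (ConcreteCategory.hom (((LeftExtension.mk _ (β.lanUnit.app G)).coconeAt Y.2).ι.app (CostructuredArrow.mk E.hom.2) ≫
            (hG β G Y.2).desc (innerCocone α β F G Y s (CostructuredArrow.mk E.hom.1))) xy.2) xy.1 =
          s.ι.app E xy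
      rw [h2]
      rfl
    uniq := fun s m hm => by
      have key : (TypeCat.ofHom fun a => TypeCat.ofHom fun b => m (a, b)) =
          (hF α F Y.1).desc (outerCocone α β F G Y s) := by
        apply (hF α F Y.1).hom_ext
        intro i
        apply ConcreteCategory.hom_ext
        intro x
        have h1 := types_congr_hom ((hF α F Y.1).fac (outerCocone α β F G Y s) i) x
        erw [types_comp_apply, types_comp_apply, h1]
        apply (hG β G Y.2).hom_ext
        intro j
        apply ConcreteCategory.hom_ext
        intro y
        have h2 := types_congr_hom ((hG β G Y.2).fac (innerCocone α β F G Y s i) j) y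
        change _ = ConcreteCategory.hom (C := Type u) (X := F.obj i.left) (Y := s.pt)
          (ConcreteCategory.hom (((LeftExtension.mk _ (β.lanUnit.app G)).coconeAt Y.2).ι.app j ≫
            (hG β G Y.2).desc (innerCocone α β F G Y s i)) y) x
        rw [h2]
        have h3 := types_congr_hom (hm (mkE α β Y i j)) (x, y)
        exact h3
      apply ConcreteCategory.hom_ext
      intro ab
      exact types_congr_hom (types_congr_hom key ab.1) ab.2 }

end LanExtProdAux

open LanExtProdAux in
/-- Left Kan extension along `α × β` of an external product is naturally isomorphic to
the external product of the left Kan extensions. -/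
theorem lan_extProd {C₀ C₁ D₀ D₁ : Type u}
    [SmallCategory C₀] [SmallCategory C₁] [SmallCategory D₀] [SmallCategory D₁]
    (α : C₀ ⥤ C₁) (β : D₀ ⥤ D₁) (F : C₀ ⥤ Type u) (G : D₀ ⥤ Type u) :
    Nonempty ((α.prod β).lan.obj (typeExtProd F G) ≅
      typeExtProd (α.lan.obj F) (β.lan.obj G)) := by
  have : (typeExtProd (α.lan.obj F) (β.lan.obj G)).IsLeftKanExtension (extUnit α β F G) :=
    (extPointwise α β F G).isLeftKanExtension
  exact ⟨Functor.leftKanExtensionUnique _ ((α.prod β).lanUnit.app (typeExtProd F G)) _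
    (extUnit α β F G)⟩
end

section
/- Let C be a small monoidal category. For objects x, y : C, the Day convolution product of the corepresentable functors Hom_C(x, −) and Hom_C(y, −) in the functor category C ⥤ Type is naturally isomorphic to the corepresentable functor Hom_C(x ⊗ y, −). -/
open CategoryTheory Opposite MonoidalCategory

universe u

/-- The Day convolution of two functors `F G : C ⥤ Type`: the left Kan extension of the
external product `(a, b) ↦ F(a) × G(b)` along the tensor product functor `⊗ : C × C ⥤ C`. -/
noncomputable def dayConv {C : Type u} [SmallCategory C] [MonoidalCategory C]
    (F G : C ⥤ Type u) : C ⥤ Type u :=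
  (MonoidalCategory.tensor C).lan.obj (F.prod G ⋙ MonoidalCategory.tensor (Type u))

/-- The Day convolution of the corepresentable functors `Hom_C(x, −)` and `Hom_C(y, −)` is
naturally isomorphic to the corepresentable functor `Hom_C(x ⊗ y, −)`. -/
theorem dayConv_coyoneda {C : Type u} [SmallCategory C] [MonoidalCategory C] (x y : C) :
    Nonempty (dayConv (coyoneda.obj (op x)) (coyoneda.obj (op y)) ≅
      coyoneda.obj (op (x ⊗ y))) := by
  let K := MonoidalCategory.tensor C
  let F : C × C ⥤ Type u :=
    (coyoneda.obj (op x)).prod (coyoneda.obj (op y)) ⋙ MonoidalCategory.tensor (Type u)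
  let α : F ⟶ K ⋙ coyoneda.obj (op (x ⊗ y)) :=
    { app := fun p => TypeCat.ofHom (fun fg => fg.1 ⊗ₘ fg.2)
      naturality := by
        intro p q f
        ext fg
        dsimp [F, K]
        exact (tensorHom_comp_tensorHom fg.1 fg.2 f.1 f.2).symm }
  have : (coyoneda.obj (op (x ⊗ y))).IsLeftKanExtension α := by
    constructor
    constructor
    let desc : ∀ Y : Functor.LeftExtension K F,
        (Functor.LeftExtension.mk _ α) ⟶ Y := fun Y =>
      StructuredArrow.homMk
        { app := fun c => TypeCat.ofHom (fun h => Y.right.map h (Y.hom.app (x, y) (𝟙 x, 𝟙 y)))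
          naturality := by
            intro c c' f
            ext h
            exact ConcreteCategory.congr_hom (Y.right.map_comp h f) _ }
        (by
          ext p fg
          have := types_congr_hom (Y.hom.naturality (X := (x, y)) (Y := p) (fg.1, fg.2)) ((𝟙 x, 𝟙 y) : (x ⟶ x) × (y ⟶ y))
          dsimp [F, K, α] at this ⊢
          refine this.symm.trans (congrArg (Y.hom.app p) ?_)
          exact Prod.ext (Category.id_comp _) (Category.id_comp _))
    apply Limits.IsInitial.ofUniqueHom desc
    · intro Y m
      ext c h
      have h1 : (𝟙 (x ⊗ y) : x ⊗ y ⟶ x ⊗ y) = α.app (x, y) ((𝟙 x, 𝟙 y) : (x ⟶ x) × (y ⟶ y)) := by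
        simp [α]
      have h2 := types_congr_hom (congrFun (congrArg NatTrans.app
        (StructuredArrow.w m)) (x, y)) ((𝟙 x, 𝟙 y) : (x ⟶ x) × (y ⟶ y))
      have h3 := types_congr_hom (m.right.naturality (X := x ⊗ y) (Y := c) h) (𝟙 (x ⊗ y))
      dsimp at h2 h3 ⊢
      calc m.right.app c h = m.right.app c (𝟙 (x ⊗ y) ≫ h) :=
            (congrArg (m.right.app c) (Category.id_comp (X := x ⊗ y) (Y := c) h)).symm
        _ = Y.right.map h (m.right.app (x ⊗ y) (𝟙 (x ⊗ y))) := h3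
        _ = Y.right.map h (Y.hom.app (x, y) (𝟙 x, 𝟙 y)) := by
            rw [h1]; exact congrArg (Y.right.map h) h2
        _ = (desc Y).right.app c h := rfl
  exact ⟨Functor.leftKanExtensionUnique _ (K.lanUnit.app F) _ α⟩
end

section
/- Let C be a small monoidal category and F : C ⥤ Type a lax monoidal functor with unit map ε : PUnit ⟶ F(𝟙_C) and multiplication μ_{c,c'} : F(c) × F(c') ⟶ F(c ⊗ c'). Then the category of elements F.Elements carries a monoidal structure with tensor product (c, x) ⊗ (c', x') = (c ⊗ c', μ_{c,c'}(x, x')) and unit (𝟙_C, ε(*)), such that the forgetful functor F.Elements ⥤ C is strict monoidal (preserves tensor products and unit on the nose, with identity structure morphisms). -/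
open CategoryTheory MonoidalCategory Functor.LaxMonoidal

universe u

namespace ElementsMonoidalAux

variable {C : Type u} [SmallCategory C] [MonoidalCategory C]
  (F : C ⥤ Type u) [F.LaxMonoidal]

open CategoryOfElements

noncomputable def str : MonoidalCategoryStruct F.Elements where
  tensorObj X Y := ⟨X.1 ⊗ Y.1, μ F X.1 Y.1 (X.2, Y.2)⟩
  tensorUnit := ⟨𝟙_ C, ε F PUnit.unit⟩
  tensorHom {X X' Y Y'} u v := homMk _ _ (u.val ⊗ₘ v.val) (by
    have := types_congr_hom (μ_natural F u.val v.val) (X.2, Y.2)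
    simp only [types_comp_apply, tensor_apply] at this
    exact this.symm.trans (congrArg (ConcreteCategory.hom (μ F X'.1 Y'.1)) (Prod.ext u.2 v.2)))
  whiskerLeft X {Y Y'} v := homMk _ _ (X.1 ◁ v.val) (by
    have := types_congr_hom (μ_natural F (𝟙 X.1) v.val) (X.2, Y.2)
    simp only [types_comp_apply, tensor_apply, FunctorToTypes.map_id_apply,
      id_tensorHom] at this
    exact this.symm.trans (congrArg (ConcreteCategory.hom (μ F X.1 Y'.1)) (Prod.ext (by exact Functor.map_id_apply F X.1 X.2) v.2)))
  whiskerRight {X X'} u Y := homMk _ _ (u.val ▷ Y.1) (by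
    have := types_congr_hom (μ_natural F u.val (𝟙 Y.1)) (X.2, Y.2)
    simp only [types_comp_apply, tensor_apply, FunctorToTypes.map_id_apply,
      tensorHom_id] at this
    exact this.symm.trans (congrArg (ConcreteCategory.hom (μ F X'.1 Y.1)) (Prod.ext u.2 (by exact Functor.map_id_apply F Y.1 Y.2))))
  associator X Y Z := isoMk _ _ (α_ X.1 Y.1 Z.1) (by
    have := types_congr_hom (associativity F X.1 Y.1 Z.1) ((X.2, Y.2), Z.2)
    simp only [types_comp_apply, whiskerRight_apply, whiskerLeft_apply,
      associator_hom_apply] at this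
    exact this)
  leftUnitor X := isoMk _ _ (λ_ X.1) (by
    have := types_congr_hom (left_unitality F X.1) (PUnit.unit, X.2)
    simp only [types_comp_apply, whiskerRight_apply, leftUnitor_hom_apply] at this
    exact this.symm)
  rightUnitor X := isoMk _ _ (ρ_ X.1) (by
    have := types_congr_hom (right_unitality F X.1) (X.2, PUnit.unit)
    simp only [types_comp_apply, whiskerLeft_apply, rightUnitor_hom_apply] at this
    exact this.symm)

section
attribute [local instance] str

@[simp] lemma str_tensorObj_fst (X Y : F.Elements) : (X ⊗ Y).1 = X.1 ⊗ Y.1 := rfl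

@[simp] lemma str_unit_fst : (𝟙_ F.Elements).1 = 𝟙_ C := rfl

@[simp] lemma str_tensorHom_val {X X' Y Y' : F.Elements} (u : X ⟶ X') (v : Y ⟶ Y') :
    (u ⊗ₘ v : X ⊗ Y ⟶ X' ⊗ Y').val = (u.val ⊗ₘ v.val) := rfl

@[simp] lemma str_whiskerLeft_val (X : F.Elements) {Y Y' : F.Elements} (v : Y ⟶ Y') :
    (X ◁ v : X ⊗ Y ⟶ X ⊗ Y').val = (X.1 ◁ v.val) := rfl

@[simp] lemma str_whiskerRight_val {X X' : F.Elements} (u : X ⟶ X') (Y : F.Elements) :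
    (u ▷ Y : X ⊗ Y ⟶ X' ⊗ Y).val = (u.val ▷ Y.1) := rfl

@[simp] lemma str_associator_hom_val (X Y Z : F.Elements) :
    (α_ X Y Z).hom.val = (α_ X.1 Y.1 Z.1).hom := rfl

@[simp] lemma str_leftUnitor_hom_val (X : F.Elements) :
    (λ_ X).hom.val = (λ_ X.1).hom := rfl

@[simp] lemma str_rightUnitor_hom_val (X : F.Elements) :
    (ρ_ X).hom.val = (ρ_ X.1).hom := rfl

noncomputable def mon : MonoidalCategory F.Elements :=
  MonoidalCategory.ofTensorHom
    (id_tensorHom_id := fun X Y => CategoryOfElements.ext F _ _ (by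
      simp [id_tensorHom_id]))
    (id_tensorHom := fun X _ _ f => CategoryOfElements.ext F _ _ (by
      simp [id_tensorHom]))
    (tensorHom_id := fun f Y => CategoryOfElements.ext F _ _ (by
      simp [tensorHom_id]))
    (tensorHom_comp_tensorHom := fun f₁ f₂ g₁ g₂ => CategoryOfElements.ext F _ _ (by
      simp [tensorHom_comp_tensorHom]))
    (associator_naturality := fun f₁ f₂ f₃ => CategoryOfElements.ext F _ _ (by
      simp [associator_naturality]))
    (leftUnitor_naturality := fun f => CategoryOfElements.ext F _ _ (by
      simp [leftUnitor_naturality]))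
    (rightUnitor_naturality := fun f => CategoryOfElements.ext F _ _ (by
      simp [rightUnitor_naturality]))
    (pentagon := fun W X Y Z => CategoryOfElements.ext F _ _ (by
      simp [MonoidalCategory.pentagon]))
    (triangle := fun X Y => CategoryOfElements.ext F _ _ (by
      simp [MonoidalCategory.triangle]))

end

end ElementsMonoidalAux

/-- For a lax monoidal functor `F : C ⥤ Type` (with unit `ε` and multiplication `μ`), the
category of elements `F.Elements` carries a monoidal structure with tensor
`(c, x) ⊗ (c', x') = (c ⊗ c', μ_{c,c'}(x, x'))` and unit `(𝟙_C, ε(*))`, such that the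
forgetful functor `F.Elements ⥤ C` is strict monoidal: it preserves tensor products and
unit on the nose, and sends the associator and unitors to those of `C` (up to the
canonical `eqToHom` identifications). -/
theorem elements_monoidal {C : Type u} [SmallCategory C] [MonoidalCategory C]
    (F : C ⥤ Type u) [F.LaxMonoidal] :
    ∃ M : MonoidalCategory F.Elements,
      ∃ hobj : ∀ X Y : F.Elements,
          M.tensorObj X Y = ⟨X.1 ⊗ Y.1, μ F X.1 Y.1 (X.2, Y.2)⟩,
      ∃ hunit : M.tensorUnit = ⟨𝟙_ C, ε F PUnit.unit⟩,
        (∀ {X X' Y Y' : F.Elements} (u : X ⟶ X') (v : Y ⟶ Y'),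
          (M.tensorHom u v).val =
            eqToHom (congrArg Sigma.fst (hobj X Y)) ≫ (u.val ⊗ₘ v.val) ≫
              eqToHom (congrArg Sigma.fst (hobj X' Y')).symm) ∧
        (∀ X Y Z : F.Elements,
          (M.associator X Y Z).hom.val =
            eqToHom (by rw [hobj, hobj]) ≫ (α_ X.1 Y.1 Z.1).hom ≫
              eqToHom (by rw [hobj, hobj]) ) ∧
        (∀ X : F.Elements,
          (M.leftUnitor X).hom.val =
            eqToHom (by rw [hobj, hunit]) ≫ (λ_ X.1).hom) ∧
        (∀ X : F.Elements,
          (M.rightUnitor X).hom.val =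
            eqToHom (by rw [hobj, hunit]) ≫ (ρ_ X.1).hom) := by
  refine ⟨ElementsMonoidalAux.mon F, fun _ _ => rfl, rfl, ?_, ?_, ?_, ?_⟩
  · intro X X' Y Y' u v
    exact ((Category.id_comp _).trans (Category.comp_id (u.val ⊗ₘ v.val))).symm
  · intro X Y Z
    exact ((Category.id_comp _).trans (Category.comp_id (α_ X.1 Y.1 Z.1).hom)).symm
  · intro X
    exact (Category.id_comp (λ_ X.1).hom).symm
  · intro X
    exact (Category.id_comp (ρ_ X.1).hom).symm
end

section
/- Let S be a small category, and let P : X ⥤ S and Q : Y ⥤ S be Grothendieck opfibrations, and p : X ⥤ Y a functor over S (Q ∘ p = P) sending P-strongly-cocartesian morphisms to Q-strongly-cocartesian morphisms. Suppose that for every object s of S the induced functor on fibers p_s : X_s ⥤ Y_s is a Grothendieck opfibration, and that for every morphism e : s ⟶ t the pushforward functor e_! : X_s ⥤ X_t sends p_s-strongly-cocartesian morphisms to p_t-strongly-cocartesian morphisms. Then p : X ⥤ Y is a Grothendieck opfibration. -/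
open CategoryTheory

universe u

variable {S X Y : Type u} [SmallCategory S] [SmallCategory X] [SmallCategory Y]

/-- A functor is a Grothendieck opfibration if every morphism out of the image of an
object admits a strongly cocartesian lift. -/
def IsOpfibration {A B : Type u} [SmallCategory A] [SmallCategory B] (P : A ⥤ B) : Prop :=
  ∀ ⦃a : A⦄ ⦃s : B⦄ (f : P.obj a ⟶ s), ∃ (b : A) (φ : a ⟶ b), P.IsStronglyCocartesian f φ

/-- For a functor `p : X ⥤ Y` over `S` (with `P : X ⥤ S` and `Q : Y ⥤ S` the structure
functors), a morphism `φ` of `X` lying in the fiber over `s : S` is strongly cocartesian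
for the induced functor `p_s : X_s ⥤ Y_s` on fibers if every vertical morphism `h` out of
its source factoring through `p(φ)` by a vertical morphism `g` of `Y_s` admits a unique
vertical lift `k` of `g` with `φ ≫ k = h`. -/
def FiberwiseStronglyCocartesian (P : X ⥤ S) (p : X ⥤ Y) (Q : Y ⥤ S) (s : S)
    {a b : X} (φ : a ⟶ b) : Prop :=
  P.IsHomLift (𝟙 s) φ ∧
    ∀ (c : X) (h : a ⟶ c) (g : p.obj b ⟶ p.obj c),
      P.IsHomLift (𝟙 s) h → Q.IsHomLift (𝟙 s) g → p.map φ ≫ g = p.map h →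
        ∃! k : b ⟶ c, P.IsHomLift (𝟙 s) k ∧ p.map k = g ∧ φ ≫ k = h

section Helpers

open Functor Category

variable {A B C : Type u} [SmallCategory A] [SmallCategory B] [SmallCategory C]

lemma homLift_of_comp (p : A ⥤ B) (Q : B ⥤ C) {R S : C} (f : R ⟶ S) {a b : A} (φ : a ⟶ b)
    (h : (p ⋙ Q).IsHomLift f φ) : Q.IsHomLift f (p.map φ) := by
  obtain ⟨⟩ := h
  exact IsHomLift.map Q (p.map φ)

lemma homLift_comp_of (p : A ⥤ B) (Q : B ⥤ C) {R S : C} (f : R ⟶ S) {a b : A} (φ : a ⟶ b)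
    (h : Q.IsHomLift f (p.map φ)) : (p ⋙ Q).IsHomLift f φ := by
  have h1 := IsHomLift.domain_eq Q f (p.map φ)
  have h2 := IsHomLift.codomain_eq Q f (p.map φ)
  exact IsHomLift.of_fac' (p ⋙ Q) f φ h1 h2 (IsHomLift.fac' Q f (p.map φ))

lemma cocart_map (F : A ⥤ B) {R S : B} {a b : A} (f : R ⟶ S) (φ : a ⟶ b)
    (h : F.IsStronglyCocartesian f φ) : F.IsStronglyCocartesian (F.map φ) φ := by
  have hl := h.toIsHomLift
  revert h
  obtain ⟨⟩ := hl
  exact id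

lemma cocart_of_homLift (F : A ⥤ B) {R S : B} (f : R ⟶ S) {a b : A} (φ : a ⟶ b)
    (h : F.IsStronglyCocartesian (F.map φ) φ) (hl : F.IsHomLift f φ) :
    F.IsStronglyCocartesian f φ := by
  obtain ⟨⟩ := hl
  exact h

lemma cocart_of_eqToHom_comp (F : A ⥤ B) {R R' S : B} (h : R' = R) (f : R ⟶ S) {a b : A}
    (φ : a ⟶ b) (hφ : F.IsStronglyCocartesian (eqToHom h ≫ f) φ) :
    F.IsStronglyCocartesian f φ := by
  subst h; simpa using hφ

end Helpers

open Functor Category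

/-- **Gluing lemma for opfibrations.** Let `P : X ⥤ S` and `Q : Y ⥤ S` be Grothendieck
opfibrations and `p : X ⥤ Y` a functor over `S` preserving strongly cocartesian morphisms.
If the induced functor on each fiber is an opfibration, and pushforward along any morphism
of `S` preserves fiberwise strongly cocartesian morphisms, then `p` is a Grothendieck
opfibration. -/
theorem isOpfibration_of_fiberwise (P : X ⥤ S) (Q : Y ⥤ S) (p : X ⥤ Y)
    (hP : IsOpfibration P) (hQ : IsOpfibration Q)
    (hcomm : p ⋙ Q = P)
    -- `p` sends `P`-strongly cocartesian morphisms to `Q`-strongly cocartesian ones: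
    (hpres : ∀ {a b : X} (φ : a ⟶ b), P.IsStronglyCocartesian (P.map φ) φ →
      Q.IsStronglyCocartesian (Q.map (p.map φ)) (p.map φ))
    -- each induced functor on fibers `p_s : X_s ⥤ Y_s` is an opfibration:
    (hfib : ∀ (s : S) (a : X), P.obj a = s → ∀ (y : Y) (g : p.obj a ⟶ y),
      Q.IsHomLift (𝟙 s) g →
        ∃ (b : X) (φ : a ⟶ b) (hb : p.obj b = y),
          FiberwiseStronglyCocartesian P p Q s φ ∧ p.map φ ≫ eqToHom hb = g)
    -- pushforward along `e : s ⟶ t` preserves fiberwise strongly cocartesian morphisms: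
    (hpush : ∀ {s t : S} (e : s ⟶ t) {a b a' b' : X} (φ : a ⟶ b)
      (α : a ⟶ a') (β : b ⟶ b') (ψ : a' ⟶ b'),
      FiberwiseStronglyCocartesian P p Q s φ →
      P.IsStronglyCocartesian e α → P.IsStronglyCocartesian e β →
      P.IsHomLift (𝟙 t) ψ → α ≫ ψ = φ ≫ β →
      FiberwiseStronglyCocartesian P p Q t ψ) :
    IsOpfibration p := by
  subst hcomm
  intro a y f
  -- cocartesian lift of `Q.map f` at `a`
  obtain ⟨a', α, hα⟩ := hP (a := a) (Q.map f)
  have hQα : Q.IsStronglyCocartesian (Q.map (p.map α)) (p.map α) :=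
    hpres α (cocart_map _ _ α hα)
  have hαl := hα.toIsHomLift
  have cod : Q.obj (p.obj a') = Q.obj y := IsHomLift.codomain_eq (p ⋙ Q) (Q.map f) α
  -- factor `f` through `p.map α` as a vertical morphism `g₀`
  have hf' : Q.map f = Q.map (p.map α) ≫ eqToHom cod := by
    have h := IsHomLift.fac' (p ⋙ Q) (Q.map f) α
    have h2 : Q.map (p.map α) = (p ⋙ Q).map α := rfl
    rw [h2, h]; simp
  obtain ⟨g₀, ⟨hg₀l, hg₀fac⟩, -⟩ :=
    IsStronglyCocartesian.universal_property Q (Q.map (p.map α)) (p.map α)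
      (eqToHom cod) (Q.map f) hf' f
  have hg₀v : Q.IsHomLift (𝟙 (Q.obj y)) g₀ :=
    (IsHomLift.lift_eqToHom_comp_iff Q (𝟙 (Q.obj y)) g₀ cod).mp (by rwa [Category.comp_id])
  -- fiberwise cocartesian lift of `g₀`
  obtain ⟨b, φ', hb, hφ', hfac⟩ := hfib (Q.obj y) a' cod y g₀ hg₀v
  have hφ'l : (p ⋙ Q).IsHomLift (𝟙 (Q.obj y)) φ' := hφ'.1
  refine ⟨b, α ≫ φ', ?_⟩
  have hlift : p.IsHomLift f (α ≫ φ') := by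
    apply IsHomLift.of_fac' p f (α ≫ φ') rfl hb
    rw [p.map_comp]
    rw [← hg₀fac, ← hfac]
    simp
  refine { toIsHomLift := hlift, universal_property' := ?_ }
  intro c g ψ hψ
  have hpψ : p.map ψ = f ≫ g := (IsHomLift.eq_of_isHomLift p (f ≫ g) ψ).symm
  have hψP : (p ⋙ Q).IsHomLift (Q.map f ≫ Q.map g) ψ := by
    apply homLift_comp_of
    rw [hpψ, ← Q.map_comp]
    infer_instance
  -- factor ψ through α
  obtain ⟨ψ₁, ⟨hψ₁l, hψ₁fac⟩, -⟩ :=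
    IsStronglyCocartesian.universal_property (p ⋙ Q) (Q.map f) α
      (Q.map g) (Q.map f ≫ Q.map g) rfl ψ
  -- cocartesian lifts of `Q.map g` at `a'` and `b`
  have hcodb : Q.obj (p.obj b) = Q.obj y := congrArg Q.obj hb
  obtain ⟨a'', α', hα'0⟩ := hP (a := a') (eqToHom cod ≫ Q.map g)
  have hα' : (p ⋙ Q).IsStronglyCocartesian (Q.map g) α' :=
    cocart_of_eqToHom_comp _ cod _ α' hα'0
  obtain ⟨b'', β, hβ0⟩ := hP (a := b) (eqToHom hcodb ≫ Q.map g)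
  have hβ : (p ⋙ Q).IsStronglyCocartesian (Q.map g) β :=
    cocart_of_eqToHom_comp _ hcodb _ β hβ0
  have hQβ : Q.IsStronglyCocartesian (Q.map (p.map β)) (p.map β) :=
    hpres β (cocart_map _ _ β hβ0)
  have hQα' : Q.IsStronglyCocartesian (Q.map (p.map α')) (p.map α') :=
    hpres α' (cocart_map _ _ α' hα'0)
  have hβl := hβ.toIsHomLift
  -- the pushforward ρ of φ' along Q.map g
  obtain ⟨ρ, ⟨hρl, hρfac⟩, -⟩ :=
    IsStronglyCocartesian.universal_property (p ⋙ Q) (Q.map g) α'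
      (𝟙 (Q.obj (p.obj c))) (Q.map g) (Category.comp_id _).symm (φ' ≫ β)
  have hρfib : FiberwiseStronglyCocartesian (p ⋙ Q) p Q (Q.obj (p.obj c)) ρ :=
    hpush (Q.map g) φ' α' β ρ hφ' hα' hβ hρl hρfac
  -- factor ψ₁ through α'
  obtain ⟨ψ₂, ⟨hψ₂l, hψ₂fac⟩, -⟩ :=
    IsStronglyCocartesian.universal_property (p ⋙ Q) (Q.map g) α'
      (𝟙 (Q.obj (p.obj c))) (Q.map g) (Category.comp_id _).symm ψ₁
  -- the vertical morphism g' with p.map β ≫ g' = eqToHom hb ≫ g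
  have codβ : Q.obj (p.obj b'') = Q.obj (p.obj c) :=
    IsHomLift.codomain_eq (p ⋙ Q) (Q.map g) β
  have hf'' : Q.map (eqToHom hb ≫ g) = Q.map (p.map β) ≫ eqToHom codβ := by
    have h := IsHomLift.fac' (p ⋙ Q) (Q.map g) β
    have h2 : Q.map (p.map β) = (p ⋙ Q).map β := rfl
    rw [Q.map_comp, eqToHom_map, h2, h]
    simp
  obtain ⟨g', ⟨hg'l0, hg'fac⟩, -⟩ :=
    IsStronglyCocartesian.universal_property Q (Q.map (p.map β)) (p.map β)
      (eqToHom codβ) (Q.map (eqToHom hb ≫ g)) hf'' (eqToHom hb ≫ g)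
  have hg'v : Q.IsHomLift (𝟙 (Q.obj (p.obj c))) g' :=
    (IsHomLift.lift_eqToHom_comp_iff Q (𝟙 _) g' codβ).mp (by rwa [Category.comp_id])
  -- key computations
  have key1 : p.map ψ₁ = g₀ ≫ g := by
    have i1 : Q.IsHomLift (Q.map g) (p.map ψ₁) := homLift_of_comp p Q (Q.map g) ψ₁ hψ₁l
    have i2 : Q.IsHomLift (eqToHom cod ≫ Q.map g) (p.map ψ₁) := inferInstance
    have i3 : Q.IsHomLift (eqToHom cod ≫ Q.map g) (g₀ ≫ g) := inferInstance
    refine IsStronglyCocartesian.ext Q (Q.map (p.map α)) (p.map α) (eqToHom cod ≫ Q.map g)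
      (ψ := p.map ψ₁) (ψ' := g₀ ≫ g) ?_
    calc p.map α ≫ p.map ψ₁ = p.map (α ≫ ψ₁) := (p.map_comp _ _).symm
      _ = p.map ψ := by rw [hψ₁fac]
      _ = f ≫ g := hpψ
      _ = (p.map α ≫ g₀) ≫ g := by rw [hg₀fac]
      _ = p.map α ≫ g₀ ≫ g := by simp
  have hρQ : Q.IsHomLift (𝟙 (Q.obj (p.obj c))) (p.map ρ) := homLift_of_comp p Q (𝟙 (Q.obj (p.obj c))) ρ hρl
  have hψ₂Q : Q.IsHomLift (𝟙 (Q.obj (p.obj c))) (p.map ψ₂) := homLift_of_comp p Q (𝟙 (Q.obj (p.obj c))) ψ₂ hψ₂l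
  have hQα'g : Q.IsStronglyCocartesian (Q.map g) (p.map α') :=
    cocart_of_homLift Q (Q.map g) (p.map α') hQα' (homLift_of_comp p Q (Q.map g) α' hα'.toIsHomLift)
  have hQβg : Q.IsStronglyCocartesian (Q.map g) (p.map β) :=
    cocart_of_homLift Q (Q.map g) (p.map β) hQβ (homLift_of_comp p Q (Q.map g) β hβ.toIsHomLift)
  have key2 : p.map ρ ≫ g' = p.map ψ₂ := by
    have i1 : Q.IsHomLift (𝟙 (Q.obj (p.obj c))) (p.map ρ ≫ g') := by
      have := IsHomLift.comp_of_lift_id Q (Q.obj (p.obj c)) (p.map ρ) g'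
      exact this
    refine IsStronglyCocartesian.ext Q (Q.map g) (p.map α') (𝟙 (Q.obj (p.obj c)))
      (ψ := p.map ρ ≫ g') (ψ' := p.map ψ₂) ?_
    calc p.map α' ≫ p.map ρ ≫ g' = p.map (α' ≫ ρ) ≫ g' := by rw [p.map_comp]; simp
      _ = p.map (φ' ≫ β) ≫ g' := by rw [hρfac]
      _ = p.map φ' ≫ p.map β ≫ g' := by rw [p.map_comp]; simp
      _ = p.map φ' ≫ eqToHom hb ≫ g := by rw [hg'fac]
      _ = (p.map φ' ≫ eqToHom hb) ≫ g := by simp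
      _ = g₀ ≫ g := by rw [hfac]
      _ = p.map ψ₁ := key1.symm
      _ = p.map (α' ≫ ψ₂) := by rw [hψ₂fac]
      _ = p.map α' ≫ p.map ψ₂ := p.map_comp _ _
  obtain ⟨k, ⟨hkl, hkmap, hkfac⟩, hkuniq⟩ := hρfib.2 c ψ₂ g' hψ₂l hg'v key2
  refine ⟨β ≫ k, ⟨?_, ?_⟩, ?_⟩
  · apply IsHomLift.of_fac' p g (β ≫ k) hb rfl
    rw [p.map_comp, hkmap, hg'fac]
    simp
  · have h1 : φ' ≫ β ≫ k = ψ₁ := by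
      rw [← Category.assoc, ← hρfac, Category.assoc, hkfac, hψ₂fac]
    rw [Category.assoc, h1, hψ₁fac]
  · rintro χ' ⟨hχ'l, hχ'fac⟩
    have hpχ' : p.map χ' = eqToHom hb ≫ g := by
      rw [IsHomLift.fac' p g χ']
      simp
    have hχ'P : (p ⋙ Q).IsHomLift (eqToHom hcodb ≫ Q.map g) χ' := by
      apply homLift_comp_of
      apply IsHomLift.of_fac' Q _ _ rfl rfl
      rw [hpχ', Q.map_comp, eqToHom_map]
      simp
    obtain ⟨k', ⟨hk'l, hk'fac⟩, -⟩ :=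
      IsStronglyCocartesian.universal_property (p ⋙ Q) (eqToHom hcodb ≫ Q.map g) β
        (𝟙 (Q.obj (p.obj c))) (eqToHom hcodb ≫ Q.map g) (Category.comp_id _).symm χ'
    have hk'Q : Q.IsHomLift (𝟙 (Q.obj (p.obj c))) (p.map k') := homLift_of_comp p Q (𝟙 (Q.obj (p.obj c))) k' hk'l
    have key3 : p.map k' = g' := by
      refine IsStronglyCocartesian.ext Q (Q.map g) (p.map β) (𝟙 (Q.obj (p.obj c)))
        (ψ := p.map k') (ψ' := g') ?_
      rw [← p.map_comp, hk'fac, hpχ', hg'fac]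
    have hχ'Qg : (p ⋙ Q).IsHomLift (Q.map g) χ' :=
      (IsHomLift.lift_eqToHom_comp_iff (p ⋙ Q) (Q.map g) χ' hcodb).mp hχ'P
    have key4 : φ' ≫ χ' = ψ₁ := by
      have i : (p ⋙ Q).IsHomLift (Q.map g) (φ' ≫ χ') := by
        have := IsHomLift.comp_lift_id_left' (p ⋙ Q) (Q.obj y) φ' (Q.map g) χ'
        exact this
      refine IsStronglyCocartesian.ext (p ⋙ Q) (Q.map f) α (Q.map g)
        (ψ := φ' ≫ χ') (ψ' := ψ₁) ?_
      rw [hψ₁fac, ← Category.assoc]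
      exact hχ'fac
    have key5 : ρ ≫ k' = ψ₂ := by
      have i : (p ⋙ Q).IsHomLift (𝟙 (Q.obj (p.obj c))) (ρ ≫ k') := by
        have := IsHomLift.comp_of_lift_id (p ⋙ Q) (Q.obj (p.obj c)) ρ k'
        exact this
      refine IsStronglyCocartesian.ext (p ⋙ Q) (Q.map g) α' (𝟙 (Q.obj (p.obj c)))
        (ψ := ρ ≫ k') (ψ' := ψ₂) ?_
      rw [← Category.assoc, hρfac, Category.assoc, hk'fac, hψ₂fac, key4]
    have hkk : k' = k := hkuniq k' ⟨hk'l, key3, key5⟩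
    rw [← hk'fac, hkk]
end
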